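/- Let f : ℝⁿ → ℝ be C² and let S be the set of local minima of f with value f* containing x̄. If f satisfies quadratic growth f(x) - f* ≥ (μ/2)dist(x,S)² in a neighborhood of x̄, then for every y ∈ S sufficiently close to x̄ and every v in the normal cone N_yS one has ⟨v, ∇²f(y)v⟩ ≥ μ‖v‖² and ‖∇²f(y)v‖ ≥ μ‖v‖. -/

import Mathlib

open Metric Filter Topology
open scoped RealInnerProductSpace

/-- The normal cone to a set `S` at `y`: the polar of the (positive) tangent cone. -/
def normalCone {n : ℕ} (S : Set (EuclideanSpace ℝ (Fin n))) (y : EuclideanSpace ℝ (Fin n)) :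
    Set (EuclideanSpace ℝ (Fin n)) :=
  {w | ∀ u ∈ posTangentConeAt S y, ⟪w, u⟫ ≤ 0}

open Set in
/-- For `v` in the normal cone, `dist (y + t v, S) ≥ (‖v‖ - ε) t` for small `t > 0`. -/
lemma normal_dist_lower {n : ℕ} (S : Set (EuclideanSpace ℝ (Fin n)))
    {y v : EuclideanSpace ℝ (Fin n)} (hy : y ∈ S) (hv : v ∈ normalCone S y)
    {ε : ℝ} (hε : 0 < ε) :
    ∀ᶠ t in 𝓝[>] (0:ℝ), (‖v‖ - ε) * t ≤ Metric.infDist (y + t • v) S := by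
  by_contra hcon
  rw [Filter.not_eventually] at hcon
  obtain ⟨t0, htl0, ht0⟩ := Filter.exists_seq_forall_of_frequently hcon
  obtain ⟨N, hN⟩ := (htl0.eventually self_mem_nhdsWithin).exists_forall_of_atTop
  set t : ℕ → ℝ := fun k => t0 (k + N) with htdef
  have htl : Tendsto t atTop (𝓝[>] (0:ℝ)) := htl0.comp (tendsto_add_atTop_nat N)
  have htpos : ∀ k, 0 < t k := fun k => hN _ (Nat.le_add_left N k)
  have ht : ∀ k, Metric.infDist (y + t k • v) S < (‖v‖ - ε) * t k := by
    intro k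
    have := ht0 (k + N)
    push_neg at this
    exact this
  -- ‖v‖ - ε must be positive
  have hvε : 0 < ‖v‖ - ε := by
    have h0 := ht 0
    have : (0:ℝ) ≤ Metric.infDist (y + t 0 • v) S := Metric.infDist_nonneg
    nlinarith [htpos 0]
  -- choose points in S
  have hxk : ∀ k, ∃ x ∈ S, dist (y + t k • v) x < (‖v‖ - ε) * t k := by
    intro k
    exact (Metric.infDist_lt_iff ⟨y, hy⟩).mp (ht k)
  choose x hxS hxd using hxk
  set c : ℕ → ℝ := fun k => (t k)⁻¹ with hcdef
  set d : ℕ → EuclideanSpace ℝ (Fin n) := fun k => x k - y with hddef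
  have hkey : ∀ k, ‖v - c k • d k‖ < ‖v‖ - ε := by
    intro k
    have h1 : ‖(y + t k • v) - x k‖ < (‖v‖ - ε) * t k := by
      rw [← dist_eq_norm]; exact hxd k
    have h2 : v - c k • d k = (t k)⁻¹ • ((y + t k • v) - x k) := by
      simp only [hcdef, hddef, smul_sub, smul_add, smul_smul,
        inv_mul_cancel₀ (htpos k).ne', one_smul]
      abel
    rw [h2, norm_smul, norm_inv, Real.norm_eq_abs, abs_of_pos (htpos k)]
    calc (t k)⁻¹ * ‖(y + t k • v) - x k‖ < (t k)⁻¹ * ((‖v‖ - ε) * t k) := by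
          exact mul_lt_mul_of_pos_left h1 (inv_pos.mpr (htpos k))
      _ = ‖v‖ - ε := by rw [inv_mul_eq_div, mul_div_assoc, div_self (htpos k).ne', mul_one]
  have hmem : ∀ k, c k • d k ∈ Metric.closedBall v (‖v‖ - ε) := by
    intro k
    rw [Metric.mem_closedBall, dist_comm, dist_eq_norm]
    exact (hkey k).le
  obtain ⟨u, humem, φ, hφ, hconv⟩ :=
    (isCompact_closedBall v (‖v‖ - ε)).tendsto_subseq hmem
  have hu : u ∈ posTangentConeAt S y := by
    have hcφ : Tendsto (c ∘ φ) atTop atTop := by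
      have : Tendsto (fun k => t (φ k)) atTop (𝓝[>] (0:ℝ)) :=
        htl.comp hφ.tendsto_atTop
      exact tendsto_inv_nhdsGT_zero.comp this
    have hd0 : Tendsto (d ∘ φ) atTop (𝓝 0) :=
      tangentConeAt.lim_zero atTop (c := c ∘ φ) (tendsto_norm_atTop_atTop.comp hcφ) hconv
    refine mem_tangentConeAt_of_seq atTop
      (fun k => (⟨c (φ k), (inv_pos.mpr (htpos _)).le⟩ : NNReal)) (d ∘ φ) hd0 ?_ ?_
    · exact Filter.Eventually.of_forall fun k => by
        simp only [Function.comp, hddef]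
        convert hxS (φ k) using 2
        abel
    · exact hconv
  have hinner : ⟪v, u⟫ ≤ 0 := hv u hu
  have hdistu : ‖v - u‖ ≤ ‖v‖ - ε := by
    rw [← dist_eq_norm, dist_comm, ← Metric.mem_closedBall]
    exact humem
  have hsq : ‖v‖ ^ 2 ≤ ‖v - u‖ ^ 2 := by
    have := @norm_sub_sq_real (EuclideanSpace ℝ (Fin n)) _ _ v u
    nlinarith [sq_nonneg ‖u‖]
  nlinarith [norm_nonneg (v - u), norm_nonneg v]

open Set in
/-- One-sided second-order Taylor upper bound for `C²` functions of one variable. -/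
lemma taylor_upper {g : ℝ → ℝ} (hg : ContDiff ℝ 2 g) (hg0 : deriv g 0 = 0) {δ : ℝ} (hδ : 0 < δ) :
    ∀ᶠ t in 𝓝[>] (0:ℝ), g t - g 0 ≤ (deriv (deriv g) 0 + δ) / 2 * t ^ 2 := by
  set D : ℝ := deriv (deriv g) 0 with hD
  have hg1 : ContDiff ℝ 1 (deriv g) := by
    rw [show (2 : WithTop ℕ∞) = 1 + 1 from rfl, contDiff_succ_iff_deriv] at hg
    exact hg.2.2
  have hgdiff : Differentiable ℝ g := by
    rw [show (2 : WithTop ℕ∞) = 1 + 1 from rfl, contDiff_succ_iff_deriv] at hg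
    exact hg.1
  have hg1diff : Differentiable ℝ (deriv g) := hg1.differentiable one_ne_zero
  have hg2cont : Continuous (deriv (deriv g)) := hg1.continuous_deriv le_rfl
  -- find r > 0 with deriv² < D + δ on ball
  have hev : ∀ᶠ s in 𝓝 (0:ℝ), deriv (deriv g) s < D + δ := by
    have : Tendsto (deriv (deriv g)) (𝓝 0) (𝓝 D) := hg2cont.tendsto 0
    exact this.eventually_lt_const (by linarith)
  obtain ⟨r, hr, hball⟩ := Metric.eventually_nhds_iff_ball.mp hev
  -- ψ monotone
  have hψ : ∀ s ∈ Icc (0:ℝ) (r/2), deriv g s ≤ (D + δ) * s := by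
    set ψ : ℝ → ℝ := fun s => (D + δ) * s - deriv g s with hψdef
    have hψd : ∀ s, HasDerivAt ψ ((D + δ) - deriv (deriv g) s) s := by
      intro s
      have h := ((hasDerivAt_id s).const_mul (D + δ)).sub (hg1diff s).hasDerivAt
      simp only [id, mul_one] at h
      exact h
    have hmono : MonotoneOn ψ (Icc 0 (r/2)) := by
      apply monotoneOn_of_deriv_nonneg (convex_Icc _ _)
        (fun s _ => ((hψd s).continuousAt).continuousWithinAt)
        (fun s hs => ((hψd s).differentiableAt).differentiableWithinAt)
      intro s hs
      rw [interior_Icc] at hs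
      rw [(hψd s).deriv]
      have : s ∈ Metric.ball (0:ℝ) r := by
        rw [Metric.mem_ball, Real.dist_eq, sub_zero, abs_of_pos hs.1]
        linarith [hs.2]
      linarith [hball _ this]
    intro s hs
    have := hmono (left_mem_Icc.mpr (by linarith)) hs hs.1
    simp only [hψdef, mul_zero, hg0, sub_zero, zero_sub] at this
    linarith
  -- φ monotone
  have hφ : ∀ t ∈ Icc (0:ℝ) (r/2), g t - g 0 ≤ (D + δ) / 2 * t ^ 2 := by
    set φ : ℝ → ℝ := fun s => (D + δ) / 2 * s ^ 2 - (g s - g 0) with hφdef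
    have hφd : ∀ s, HasDerivAt φ ((D + δ) * s - deriv g s) s := by
      intro s
      have h1 : HasDerivAt (fun s : ℝ => (D + δ) / 2 * s ^ 2) ((D + δ) / 2 * (2 * s)) s := by
        simpa using ((hasDerivAt_pow 2 s).const_mul ((D + δ) / 2))
      have h2 : HasDerivAt (fun s => g s - g 0) (deriv g s) s :=
        ((hgdiff s).hasDerivAt).sub_const (g 0)
      have := h1.sub h2
      rw [show (D + δ) / 2 * (2 * s) = (D + δ) * s by ring] at this
      exact this
    have hmono : MonotoneOn φ (Icc 0 (r/2)) := by
      apply monotoneOn_of_deriv_nonneg (convex_Icc _ _)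
        (fun s _ => ((hφd s).continuousAt).continuousWithinAt)
        (fun s hs => ((hφd s).differentiableAt).differentiableWithinAt)
      intro s hs
      rw [interior_Icc] at hs
      rw [(hφd s).deriv]
      have := hψ s ⟨hs.1.le, hs.2.le⟩
      linarith
    intro t ht
    have := hmono (left_mem_Icc.mpr (by linarith)) ht ht.1
    simp only [hφdef, mul_zero, sub_self, sub_zero, ne_eq, OfNat.ofNat_ne_zero,
      not_false_eq_true, zero_pow] at this
    linarith
  filter_upwards [Ioc_mem_nhdsGT (by linarith : (0:ℝ) < r/2)] with t ht
  exact hφ t ⟨ht.1.le, ht.2⟩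

open Set in
set_option maxHeartbeats 1000000 in
/-- Quadratic growth implies Hessian lower bounds along normal directions, for C² functions. -/
theorem qg_hessian_normal_bounds {n : ℕ}
    (f : EuclideanSpace ℝ (Fin n) → ℝ) (xb : EuclideanSpace ℝ (Fin n))
    (hf : ContDiff ℝ 2 f) (hmin : IsLocalMin f xb)
    (μ : ℝ) (hμ : 0 < μ)
    (S : Set (EuclideanSpace ℝ (Fin n)))
    (hS : S = {y | IsLocalMin f y ∧ f y = f xb})
    (hQG : ∀ᶠ x in 𝓝 xb, (μ / 2) * (Metric.infDist x S) ^ 2 ≤ f x - f xb) :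
    ∀ᶠ y in 𝓝 xb, y ∈ S → ∀ v ∈ normalCone S y,
      μ * ‖v‖ ^ 2 ≤ ⟪v, fderiv ℝ (gradient f) y v⟫ ∧
      μ * ‖v‖ ≤ ‖fderiv ℝ (gradient f) y v‖ := by
  obtain ⟨r₀, hr₀, hQGball⟩ := Metric.eventually_nhds_iff_ball.mp hQG
  filter_upwards [Metric.ball_mem_nhds xb (half_pos hr₀)] with y hy hyS v hv
  have hymin : IsLocalMin f y := by rw [hS] at hyS; exact hyS.1
  have hyval : f y = f xb := by rw [hS] at hyS; exact hyS.2
  set H := fderiv ℝ (gradient f) y with hHdef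
  have key : μ * ‖v‖ ^ 2 ≤ ⟪v, H v⟫ := by
    rcases eq_or_ne v 0 with rfl | hv0
    · simp
    have hvnorm : 0 < ‖v‖ := norm_pos_iff.mpr hv0
    -- the restriction of f to the line through y in direction v
    set g : ℝ → ℝ := fun t => f (y + t • v) with hgdef
    have hL : ∀ t : ℝ, HasDerivAt (fun s : ℝ => y + s • v) v t := by
      intro t
      simpa using ((hasDerivAt_id t).smul_const v).const_add y
    have hfd : Differentiable ℝ f := hf.differentiable (by norm_num)
    have hgrad_fd : ∀ x, ⟪gradient f x, v⟫ = fderiv ℝ f x v := by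
      intro x
      rw [← InnerProductSpace.toDual_apply_apply]
      simp [gradient]
    have hgderiv : ∀ t, HasDerivAt g (⟪gradient f (y + t • v), v⟫) t := by
      intro t
      have h := (hfd (y + t • v)).hasFDerivAt.comp_hasDerivAt t (hL t)
      rw [hgrad_fd]
      exact h
    have hderivg_eq : deriv g = fun t => ⟪gradient f (y + t • v), v⟫ :=
      funext fun t => (hgderiv t).deriv
    have hgradC1 : ContDiff ℝ 1 (gradient f) := by
      have h1 : ContDiff ℝ 1 (fderiv ℝ f) := hf.fderiv_right (by norm_num)
      exact (InnerProductSpace.toDual ℝ _).symm.contDiff.comp h1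
    have hgrad0 : gradient f y = 0 := by
      have h0 : fderiv ℝ f y = 0 := hymin.fderiv_eq_zero
      simp [gradient, h0]
    have hg0 : deriv g 0 = 0 := by
      rw [hderivg_eq]
      simp [hgrad0]
    have hH : HasFDerivAt (gradient f) H y :=
      (hgradC1.differentiable one_ne_zero y).hasFDerivAt
    have hcomp : HasDerivAt (fun t : ℝ => gradient f (y + t • v)) (H v) 0 := by
      have hH' : HasFDerivAt (gradient f) H (y + (0:ℝ) • v) := by simpa using hH
      exact hH'.comp_hasDerivAt 0 (hL 0)
    have hdd : HasDerivAt (deriv g) ⟪v, H v⟫ 0 := by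
      rw [hderivg_eq]
      have hinner := (HasDerivAt.inner ℝ hcomp (hasDerivAt_const (0:ℝ) v))
      have h2 : (⟪gradient f (y + (0:ℝ) • v), (0 : EuclideanSpace ℝ (Fin n))⟫
          + ⟪H v, v⟫) = ⟪v, H v⟫ := by
        rw [inner_zero_right, zero_add, real_inner_comm]
      exact h2 ▸ hinner
    have hdd0 : deriv (deriv g) 0 = ⟪v, H v⟫ := hdd.deriv
    have hgC2 : ContDiff ℝ 2 g :=
      hf.comp (contDiff_const.add (contDiff_id.smul contDiff_const))
    -- main estimate for each ε
    have main : ∀ ε ∈ Ioo (0:ℝ) ‖v‖, μ * (‖v‖ - ε) ^ 2 - ε ≤ ⟪v, H v⟫ := by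
      intro ε hε
      have E1 := taylor_upper hgC2 hg0 hε.1
      have E2 := normal_dist_lower S hyS hv hε.1
      have E3 : ∀ᶠ t in 𝓝[>] (0:ℝ), y + t • v ∈ Metric.ball xb r₀ := by
        have hcont : Tendsto (fun t : ℝ => y + t • v) (𝓝[>] 0) (𝓝 y) := by
          have : Tendsto (fun t : ℝ => y + t • v) (𝓝 0) (𝓝 (y + (0:ℝ) • v)) :=
            (continuous_const.add (continuous_id.smul continuous_const)).tendsto 0
          simpa using this.mono_left nhdsWithin_le_nhds
        have hyball : y ∈ Metric.ball xb r₀ := by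
          rw [Metric.mem_ball] at hy ⊢
          linarith
        exact hcont.eventually (isOpen_ball.eventually_mem hyball)
      have E4 : ∀ᶠ t in 𝓝[>] (0:ℝ), (0:ℝ) < t := self_mem_nhdsWithin
      obtain ⟨t, h1, h2, h3, h4⟩ := (E1.and (E2.and (E3.and E4))).exists
      -- quadratic growth at y + t v
      have hqg := hQGball _ h3
      have hdist : (0:ℝ) ≤ (‖v‖ - ε) * t := by
        have := hε.2; nlinarith
      have hd2 : ((‖v‖ - ε) * t) ^ 2 ≤ (Metric.infDist (y + t • v) S) ^ 2 := by
        apply pow_le_pow_left₀ hdist h2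
      have hgt : g t - g 0 = f (y + t • v) - f xb := by
        simp [hgdef, hyval]
      have hfinal : μ / 2 * ((‖v‖ - ε) * t) ^ 2 ≤ (⟪v, H v⟫ + ε) / 2 * t ^ 2 := by
        calc μ / 2 * ((‖v‖ - ε) * t) ^ 2 ≤ μ / 2 * (Metric.infDist (y + t • v) S) ^ 2 := by
              apply mul_le_mul_of_nonneg_left hd2 (by linarith)
          _ ≤ f (y + t • v) - f xb := hqg
          _ = g t - g 0 := hgt.symm
          _ ≤ (deriv (deriv g) 0 + ε) / 2 * t ^ 2 := h1
          _ = (⟪v, H v⟫ + ε) / 2 * t ^ 2 := by rw [hdd0]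
      have ht2 : (0:ℝ) < t ^ 2 := by positivity
      nlinarith [mul_pow (‖v‖ - ε) t 2]
    -- take ε → 0⁺
    have hlim : Tendsto (fun ε : ℝ => μ * (‖v‖ - ε) ^ 2 - ε) (𝓝[>] 0) (𝓝 (μ * ‖v‖ ^ 2)) := by
      have : Tendsto (fun ε : ℝ => μ * (‖v‖ - ε) ^ 2 - ε) (𝓝 0) (𝓝 (μ * (‖v‖ - 0) ^ 2 - 0)) :=
        ((continuous_const.mul ((continuous_const.sub continuous_id).pow 2)).sub
          continuous_id).tendsto 0
      simpa using this.mono_left nhdsWithin_le_nhds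
    refine le_of_tendsto hlim ?_
    filter_upwards [Ioo_mem_nhdsGT_of_mem (left_mem_Ico.mpr hvnorm)] with ε hε
    exact main ε hε
  refine ⟨key, ?_⟩
  rcases eq_or_ne v 0 with rfl | hv0
  · simp
  · have hvnorm : 0 < ‖v‖ := norm_pos_iff.mpr hv0
    have h1 : μ * ‖v‖ ^ 2 ≤ ‖v‖ * ‖H v‖ := key.trans (real_inner_le_norm v (H v))
    have h2 : ‖v‖ * (μ * ‖v‖) ≤ ‖v‖ * ‖H v‖ := by nlinarith
    exact (mul_le_mul_iff_right₀ hvnorm).mp h2
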